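/- Let G be a finite simple graph on vertex set V with a proper pair-coloring f, and let W = Option V, with target vertex t = none. For i ∈ {1,2} define: the initial row vector a^i on W by a^i(some u) = 1/|S_i| if u ∈ S_i and a^i = 0 at all other entries (in particular a^i(t) = 0, and a^i is the zero vector if S_i is empty); the transition matrix M^i on W by M^i(some u)(some v) = 1/z_u if u ∈ S_i, v ∈ P_i and u,v are adjacent in G, where z_u = |N(u) ∩ P_i|; M^i(some v)(t) = 1 if v ∈ P_i; and all other entries of M^i equal 0. For Q ⊆ V let M^i_Q denote the node-interdicted matrix obtained from M^i by zeroing all rows indexed by some u with u ∈ Q, and define the capture probability J^i(Q) = 1 - (a^i ᵥ* (1 - M^i_Q)⁻¹)(t), where the inverse is the matrix inverse over ℝ. Then (J^1(Q) + J^2(Q))/2 = 1 if and only if Q is a vertex cover of G. -/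

import Mathlib

open Matrix Finset

noncomputable section

variable {V : Type*} [Fintype V] [DecidableEq V]

/-- Source set of the evader with bit function `g`: vertices whose bit is `false`. -/
def srcSet (g : V → Bool) : Finset V := Finset.univ.filter (fun u => g u = false)

/-- Penultimate set of the evader with bit function `g`: vertices whose bit is `true`. -/
def penSet (g : V → Bool) : Finset V := Finset.univ.filter (fun u => g u = true)

/-- The initial (source) row vector on `W = Option V` of the evader with bit function `g`:
uniform on the source set (at `some u` for `u` in the source set), zero elsewhere; in
particular it is zero at the target `none`, and is the zero vector if the source set is
empty (`1/0 = 0` in `ℝ`). -/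
def initVec (g : V → Bool) : Option V → ℝ := fun w =>
  match w with
  | none => 0
  | some u => if u ∈ srcSet g then 1 / ((srcSet g).card : ℝ) else 0

/-- The transition matrix on `W = Option V` of the evader with bit function `g` on the graph
`G`: from a source node `u`, move to an adjacent penultimate node `v` with probability
`1 / z_u` where `z_u = |N(u) ∩ P|`; from a penultimate node, move to the target `none` with
probability `1`; all other entries are `0`. -/
def transMat (G : SimpleGraph V) [DecidableRel G.Adj] (g : V → Bool) :
    Matrix (Option V) (Option V) ℝ := fun w w' =>
  match w, w' with
  | some u, some v =>
      if u ∈ srcSet g ∧ v ∈ penSet g ∧ G.Adj u v then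
        1 / ((G.neighborFinset u ∩ penSet g).card : ℝ)
      else 0
  | some v, none => if v ∈ penSet g then 1 else 0
  | none, _ => 0

/-- The node-interdicted matrix `M_Q` on `W = Option V`: rows indexed by `some u` with
`u ∈ Q` are zeroed (perfect sensors on all edges leaving nodes of `Q`). -/
def interdictOpt (M : Matrix (Option V) (Option V) ℝ) (Q : Finset V) :
    Matrix (Option V) (Option V) ℝ := fun w w' =>
  match w with
  | some u => if u ∈ Q then 0 else M (some u) w'
  | none => M none w'

/-- The capture probability `J(Q) = 1 - (a ᵥ* (1 - M_Q)⁻¹) t` of the evader with bit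
function `g` on `G` under the interdiction set `Q`, the target being `t = none`. -/
def captureProb (G : SimpleGraph V) [DecidableRel G.Adj] (g : V → Bool) (Q : Finset V) :
    ℝ :=
  1 - (initVec g ᵥ* (1 - interdictOpt (transMat G g) Q)⁻¹) none

-- AUX

def lvlFun (g : V → Bool) : Option V → ℕ
  | none => 0
  | some u => if g u then 1 else 2

def escape (G : SimpleGraph V) [DecidableRel G.Adj] (g : V → Bool) (Q : Finset V) : ℝ :=
  ∑ x : Option V, ∑ w : Option V,
    initVec g x * (interdictOpt (transMat G g) Q x w * interdictOpt (transMat G g) Q w none)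

lemma mem_srcSet {g : V → Bool} {u : V} : u ∈ srcSet g ↔ g u = false := by
  simp [srcSet]

lemma mem_penSet {g : V → Bool} {u : V} : u ∈ penSet g ↔ g u = true := by
  simp [penSet]

lemma N_nonneg (G : SimpleGraph V) [DecidableRel G.Adj] (g : V → Bool) (Q : Finset V)
    (w w' : Option V) : 0 ≤ interdictOpt (transMat G g) Q w w' := by
  cases w with
  | none => cases w' <;> simp [interdictOpt, transMat]
  | some u =>
    cases w' with
    | none =>
      simp only [interdictOpt, transMat]
      split_ifs <;> norm_num
    | some v =>
      simp only [interdictOpt, transMat]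
      split_ifs <;> positivity

lemma initVec_nonneg (g : V → Bool) (x : Option V) : 0 ≤ initVec g x := by
  cases x with
  | none => simp [initVec]
  | some u =>
    simp only [initVec]
    split_ifs <;> positivity

lemma hlvl (G : SimpleGraph V) [DecidableRel G.Adj] (g : V → Bool) (Q : Finset V)
    (w w' : Option V) (h : interdictOpt (transMat G g) Q w w' ≠ 0) :
    lvlFun g w' < lvlFun g w := by
  cases w with
  | none => cases w' <;> simp [interdictOpt, transMat] at h
  | some u =>
    cases w' with
    | none =>
      simp only [interdictOpt, transMat] at h
      have hu : g u = true := by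
        by_contra hc
        simp [mem_penSet, hc] at h
      simp [lvlFun, hu]
    | some v =>
      simp only [interdictOpt, transMat] at h
      have : g u = false ∧ g v = true := by
        by_cases hu : g u = false
        · refine ⟨hu, ?_⟩
          by_contra hc
          simp [mem_penSet, hc] at h
        · simp [mem_srcSet, hu] at h
      simp [lvlFun, this.1, this.2]

lemma N_cube (G : SimpleGraph V) [DecidableRel G.Adj] (g : V → Bool) (Q : Finset V) :
    interdictOpt (transMat G g) Q * interdictOpt (transMat G g) Q *
      interdictOpt (transMat G g) Q = 0 := by
  set N := interdictOpt (transMat G g) Q with hN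
  ext w w'
  simp only [Matrix.mul_apply, Matrix.zero_apply]
  apply Finset.sum_eq_zero
  intro x _
  by_cases hx : N x w' = 0
  · rw [hx, mul_zero]
  · have h1 := hlvl G g Q x w' hx
    have : (∑ y, N w y * N y x) = 0 := by
      apply Finset.sum_eq_zero
      intro y _
      by_cases hy : N y x = 0
      · rw [hy, mul_zero]
      · by_cases hw : N w y = 0
        · rw [hw, zero_mul]
        · have h2 := hlvl G g Q y x hy
          have h3 := hlvl G g Q w y hw
          have hub : lvlFun g w ≤ 2 := by
            cases w <;> simp [lvlFun] <;> split <;> omega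
          omega
    rw [this, zero_mul]

lemma captureProb_eq (G : SimpleGraph V) [DecidableRel G.Adj] (g : V → Bool) (Q : Finset V) :
    captureProb G g Q = 1 - escape G g Q := by
  set N := interdictOpt (transMat G g) Q with hN
  have hinv : (1 - N)⁻¹ = 1 + N + N * N := by
    apply Matrix.inv_eq_right_inv
    have h : (1 - N) * (1 + N + N * N) = 1 - N * N * N := by noncomm_ring
    rw [h, N_cube, sub_zero]
  unfold captureProb
  rw [← hN, hinv]
  have h1 : (initVec g ᵥ* (1 + N + N * N)) none
      = initVec g none + (initVec g ᵥ* N) none + (initVec g ᵥ* (N * N)) none := by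
    simp [Matrix.vecMul_add, Matrix.vecMul_one]
  rw [h1]
  have h2 : initVec g none = 0 := rfl
  have h3 : (initVec g ᵥ* N) none = 0 := by
    rw [Matrix.vecMul, dotProduct]
    apply Finset.sum_eq_zero
    intro x _
    cases x with
    | none => simp [initVec]
    | some u =>
      by_cases hu : g u = false
      · have : N (some u) none = 0 := by
          simp only [hN, interdictOpt, transMat]
          split_ifs with hq hp
          · rfl
          · rw [mem_penSet] at hp; simp [hu] at hp
          · rfl
        rw [this, mul_zero]
      · have : initVec g (some u) = 0 := by
          simp [initVec, mem_srcSet, hu]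
        rw [this, zero_mul]
  have h4 : (initVec g ᵥ* (N * N)) none = escape G g Q := by
    rw [Matrix.vecMul, dotProduct]
    unfold escape
    rw [← hN]
    apply Finset.sum_congr rfl
    intro x _
    rw [Matrix.mul_apply, Finset.mul_sum]
  rw [h2, h3, h4]
  ring

lemma escape_nonneg (G : SimpleGraph V) [DecidableRel G.Adj] (g : V → Bool) (Q : Finset V) :
    0 ≤ escape G g Q := by
  apply Finset.sum_nonneg
  intro x _
  apply Finset.sum_nonneg
  intro w _
  exact mul_nonneg (initVec_nonneg g x)
    (mul_nonneg (N_nonneg G g Q x w) (N_nonneg G g Q w none))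

lemma escape_eq_zero_iff (G : SimpleGraph V) [DecidableRel G.Adj] (g : V → Bool)
    (Q : Finset V) :
    escape G g Q = 0 ↔
      ∀ u v : V, G.Adj u v → g u = false → g v = true → u ∈ Q ∨ v ∈ Q := by
  set N := interdictOpt (transMat G g) Q with hN
  have hterm : ∀ x w, 0 ≤ initVec g x * (N x w * N w none) := fun x w =>
    mul_nonneg (initVec_nonneg g x)
      (mul_nonneg (N_nonneg G g Q x w) (N_nonneg G g Q w none))
  rw [escape, Finset.sum_eq_zero_iff_of_nonneg
    (fun x _ => Finset.sum_nonneg (fun w _ => hterm x w))]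
  constructor
  · intro h u v hadj hu hv
    by_contra hc
    push_neg at hc
    obtain ⟨huQ, hvQ⟩ := hc
    have := h (some u) (Finset.mem_univ _)
    rw [Finset.sum_eq_zero_iff_of_nonneg (fun w _ => hterm (some u) w)] at this
    have hz := this (some v) (Finset.mem_univ _)
    have ha : initVec g (some u) > 0 := by
      have hmem : u ∈ srcSet g := mem_srcSet.mpr hu
      have hcard : 0 < (srcSet g).card := Finset.card_pos.mpr ⟨u, hmem⟩
      simp only [initVec, if_pos hmem]
      exact div_pos one_pos (by exact_mod_cast hcard)
    have hN1 : N (some u) (some v) > 0 := by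
      have hvm : v ∈ G.neighborFinset u ∩ penSet g := by
        rw [Finset.mem_inter, SimpleGraph.mem_neighborFinset]
        exact ⟨hadj, mem_penSet.mpr hv⟩
      have hcard : 0 < ((G.neighborFinset u ∩ penSet g)).card :=
        Finset.card_pos.mpr ⟨v, hvm⟩
      have hcond : u ∈ srcSet g ∧ v ∈ penSet g ∧ G.Adj u v :=
        ⟨mem_srcSet.mpr hu, mem_penSet.mpr hv, hadj⟩
      simp only [hN, interdictOpt, transMat, if_neg huQ, if_pos hcond]
      exact div_pos one_pos (by exact_mod_cast hcard)
    have hN2 : N (some v) none > 0 := by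
      simp only [hN, interdictOpt, transMat, if_neg hvQ, if_pos (mem_penSet.mpr hv)]
      norm_num
    have := mul_pos ha (mul_pos hN1 hN2)
    linarith
  · intro h x _
    apply Finset.sum_eq_zero
    intro w _
    cases x with
    | none => simp [initVec]
    | some u =>
      cases w with
      | none =>
        have : N (some u) none * N none none = 0 := by
          have : N none none = 0 := by simp [hN, interdictOpt, transMat]
          rw [this, mul_zero]
        rw [this, mul_zero]
      | some v =>
        by_cases hu : g u = false
        · by_cases hv : g v = true
          · by_cases hadj : G.Adj u v
            · rcases h u v hadj hu hv with hq | hq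
              · have : N (some u) (some v) = 0 := by
                  simp [hN, interdictOpt, hq]
                rw [this, zero_mul, mul_zero]
              · have : N (some v) none = 0 := by
                  simp [hN, interdictOpt, hq]
                rw [this, mul_zero, mul_zero]
            · have : N (some u) (some v) = 0 := by
                simp only [hN, interdictOpt, transMat]
                split_ifs with h1 h2
                · rfl
                · exact absurd h2.2.2 hadj
                · rfl
              rw [this, zero_mul, mul_zero]
          · have : N (some v) none = 0 := by
              simp only [hN, interdictOpt, transMat]
              split_ifs with h1 h2
              · rfl
              · rw [mem_penSet] at h2; exact absurd h2 hv
              · rfl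
            rw [this, mul_zero, mul_zero]
        · have : initVec g (some u) = 0 := by simp [initVec, mem_srcSet, hu]
          rw [this, zero_mul]

/-- The paper's two-evader UME instance built from a proper pair-coloring `f` of a finite
simple graph `G` (evader `i` uses the `i`-th bit of `f`): the expected capture probability
`(J¹(Q) + J²(Q))/2` equals `1` if and only if `Q` is a vertex cover of `G`. -/
theorem two_evader_capture_prob_eq_one_iff_vertex_cover
    (G : SimpleGraph V) [DecidableRel G.Adj]
    (f : V → Bool × Bool) (hf : ∀ u v : V, G.Adj u v → f u ≠ f v) (Q : Finset V) :
    (captureProb G (fun u => (f u).1) Q + captureProb G (fun u => (f u).2) Q) / 2 = 1 ↔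
      ∀ u v : V, G.Adj u v → u ∈ Q ∨ v ∈ Q := by
  rw [captureProb_eq, captureProb_eq]
  have h1 := escape_nonneg G (fun u => (f u).1) Q
  have h2 := escape_nonneg G (fun u => (f u).2) Q
  constructor
  · intro h u v hadj
    have hsum : escape G (fun u => (f u).1) Q + escape G (fun u => (f u).2) Q = 0 := by
      linarith
    have he1 : escape G (fun u => (f u).1) Q = 0 := by linarith
    have he2 : escape G (fun u => (f u).2) Q = 0 := by linarith
    rw [escape_eq_zero_iff] at he1 he2
    have hne := hf u v hadj
    have : (f u).1 ≠ (f v).1 ∨ (f u).2 ≠ (f v).2 := by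
      by_contra hc
      push_neg at hc
      exact hne (Prod.ext hc.1 hc.2)
    have key : ∀ g : V → Bool,
        (∀ a b : V, G.Adj a b → g a = false → g b = true → a ∈ Q ∨ b ∈ Q) →
        g u ≠ g v → u ∈ Q ∨ v ∈ Q := by
      intro g hg hne'
      cases hu' : g u <;> cases hv' : g v
      · simp [hu', hv'] at hne'
      · exact hg u v hadj hu' hv'
      · exact (hg v u (G.adj_symm hadj) hv' hu').symm
      · simp [hu', hv'] at hne'
    rcases this with hb | hb
    · exact key _ he1 hb
    · exact key _ he2 hb
  · intro h
    have he1 : escape G (fun u => (f u).1) Q = 0 := by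
      rw [escape_eq_zero_iff]
      intro u v hadj _ _
      exact h u v hadj
    have he2 : escape G (fun u => (f u).2) Q = 0 := by
      rw [escape_eq_zero_iff]
      intro u v hadj _ _
      exact h u v hadj
    rw [he1, he2]
    ring


end
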